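/- Fix integers m ≥ 1 and d > 2m. The vector (ρ_m, …, ρ_d) is the unique solution of the system of equations 1 − (m/(1−x_d))·x_m = x_m; (m/(1−x_d))·(x_{k−1} − x_k) = x_k for k = m+1, …, d−1; (m/(1−x_d))·x_{d−1} = x_d, subject to x_d ∈ (0, 2m/d). Moreover this system is equivalent to the system obtained by replacing its last equation by x_m + x_{m+1} + ⋯ + x_d = 1; in particular ρ_m + ρ_{m+1} + ⋯ + ρ_d = 1. -/

import Mathlib

/-- The system of equations
`1 − (m/(1−x_d))·x_m = x_m`; `(m/(1−x_d))·(x_{k−1} − x_k) = x_k` for `k = m+1, …, d−1`;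
`(m/(1−x_d))·x_{d−1} = x_d`. -/
def degreeSystem (m d : ℕ) (x : ℕ → ℝ) : Prop :=
  (1 - ((m : ℝ) / (1 - x d)) * x m = x m) ∧
  (∀ k : ℕ, m + 1 ≤ k → k ≤ d - 1 → ((m : ℝ) / (1 - x d)) * (x (k - 1) - x k) = x k) ∧
  ((m : ℝ) / (1 - x d)) * x (d - 1) = x d

/-- The system obtained from `degreeSystem` by replacing its last equation by
`x_m + x_{m+1} + ⋯ + x_d = 1`. -/
def degreeSystem' (m d : ℕ) (x : ℕ → ℝ) : Prop :=
  (1 - ((m : ℝ) / (1 - x d)) * x m = x m) ∧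
  (∀ k : ℕ, m + 1 ≤ k → k ≤ d - 1 → ((m : ℝ) / (1 - x d)) * (x (k - 1) - x k) = x k) ∧
  (∑ k ∈ Finset.Icc m d, x k = 1)

/-- The vector `(ρ_m, …, ρ_d)` is the unique solution of the degree system subject to
`x_d ∈ (0, 2m/d)`; moreover that system is equivalent to the one with last equation replaced
by `x_m + ⋯ + x_d = 1`, and in particular `ρ_m + ⋯ + ρ_d = 1`. -/


lemma alg1 (M r : ℝ) (hA : 1 - r ≠ 0) (hB : M+1-r ≠ 0) :
    1 - M/(1-r) * ((1-r)/(M+1-r)) = (1-r)/(M+1-r) := by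
  field_simp
  ring

lemma alg2 (M r : ℝ) (p : ℕ) (hA : 1-r ≠ 0) (hB : M+1-r ≠ 0) :
    M/(1-r) * ((1-r)*M^p/(M+1-r)^(p+1) - (1-r)*M^(p+1)/(M+1-r)^(p+1+1))
      = (1-r)*M^(p+1)/(M+1-r)^(p+1+1) := by
  have hBp : ((M+1-r):ℝ)^(p+1) ≠ 0 := pow_ne_zero _ hB
  have hBp2 : ((M+1-r):ℝ)^(p+1+1) ≠ 0 := pow_ne_zero _ hB
  field_simp
  ring

lemma alg3 (M r : ℝ) (p : ℕ) (hA : 1-r ≠ 0) (hB : M+1-r ≠ 0) :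
    M/(1-r) * ((1-r)*M^p/(M+1-r)^(p+1)) = (M/(M+1-r))^(p+1) := by
  have hBp : ((M+1-r):ℝ)^(p+1) ≠ 0 := pow_ne_zero _ hB
  rw [div_pow]
  field_simp
  ring

lemma alg4 (M r : ℝ) (i : ℕ) (hA : 1-r ≠ 0) (hB : M+1-r ≠ 0) :
    M/(M+1-r) * ((1-r)*M^i/(M+1-r)^(i+1)) = (1-r)*M^(i+1)/(M+1-r)^(i+1+1) := by
  have hBp : ((M+1-r):ℝ)^(i+1) ≠ 0 := pow_ne_zero _ hB
  field_simp
  ring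


lemma ds_convex (m n : ℕ) :
    ConvexOn ℝ (Set.Iio ((m:ℝ)+1)) (fun y => ((m:ℝ)/((m:ℝ)+1-y))^n) := by
  have h1 : ConvexOn ℝ (Set.Ioi (0:ℝ)) (fun x : ℝ => x ^ (-(n:ℤ))) := convexOn_zpow _
  have hrw : ∀ w : ℝ, 0 < w → ((m:ℝ)/w)^n = (m:ℝ)^n * w ^ (-(n:ℤ)) := by
    intro w hw
    rw [div_pow, zpow_neg, zpow_natCast, div_eq_mul_inv]
  refine ⟨convex_Iio _, ?_⟩
  intro x hx z hz a b ha hb hab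
  simp only [Set.mem_Iio] at hx hz
  have hx' : (0:ℝ) < (m:ℝ)+1-x := by linarith
  have hz' : (0:ℝ) < (m:ℝ)+1-z := by linarith
  have hy' : (0:ℝ) < (m:ℝ)+1-(a*x+b*z) := by
    rcases eq_or_lt_of_le ha with h|h
    · have hb1 : b = 1 := by linarith
      rw [← h, hb1]; simpa using hz
    · nlinarith [mul_pos h hx', mul_nonneg hb hz'.le]
  have key := h1.2 (Set.mem_Ioi.2 hx') (Set.mem_Ioi.2 hz') ha hb hab
  simp only [smul_eq_mul] at key ⊢
  have e1 : a*((m:ℝ)+1-x)+b*((m:ℝ)+1-z) = (m:ℝ)+1-(a*x+b*z) := by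
    have : a + b = 1 := hab
    nlinarith [this]
  rw [e1] at key
  have hMn : (0:ℝ) ≤ (m:ℝ)^n := by positivity
  have h2 := mul_le_mul_of_nonneg_left key hMn
  rw [hrw _ hy', hrw _ hx', hrw _ hz']
  nlinarith [h2]


lemma ds_u_lt_one {m d : ℕ} (hm : 1 ≤ m) (hd : 2 * m < d) : 2*(m:ℝ)/d < 1 := by
  have hD : 2*(m:ℝ) < (d:ℝ) := by exact_mod_cast hd
  have hM : (1:ℝ) ≤ (m:ℝ) := by exact_mod_cast hm
  have hd0 : (0:ℝ) < d := by linarith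
  rw [div_lt_one hd0]; linarith

lemma ds_root_lt (m d : ℕ) (hm : 1 ≤ m) (hd : 2 * m < d) :
    ((m:ℝ)/((m:ℝ)+1-(2*(m:ℝ)/(d:ℝ))))^(d-m) < 2*(m:ℝ)/(d:ℝ) := by
  have hM : (1:ℝ) ≤ (m:ℝ) := by exact_mod_cast hm
  have hD : 2*(m:ℝ) < (d:ℝ) := by exact_mod_cast hd
  have hDpos : (0:ℝ) < d := by linarith
  have hMpos : (0:ℝ) < m := by linarith
  set M := (m:ℝ)
  set D := (d:ℝ)
  set ε : ℝ := (D - 2*M)/(D*M) with hε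
  have hεpos : 0 < ε := div_pos (by linarith) (by positivity)
  have hden : (0:ℝ) < M + 1 - 2*M/D := by
    have : 2*M/D < 1 := by rw [div_lt_one hDpos]; linarith
    linarith
  have hbase : M/(M+1-2*M/D) = (1+ε)⁻¹ := by
    have h1e : (0:ℝ) < 1 + (D - 2*M)/(D*M) := by positivity
    rw [hε, inv_eq_one_div, div_eq_div_iff hden.ne' h1e.ne']
    field_simp
    ring
  have hn : ((d-m:ℕ):ℝ) = D - M := by
    have : m ≤ d := by omega
    push_cast [Nat.cast_sub this]
    ring
  have hber : 1 + ((d-m:ℕ):ℝ) * ε ≤ (1+ε)^(d-m) := one_add_mul_le_pow (by linarith) _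
  have hsq : (0:ℝ) < (D - 2*M)^2 := pow_pos (by linarith) 2
  have hkey : D/(2*M) < 1 + ((d-m:ℕ):ℝ)*ε := by
    rw [hn, div_lt_iff₀ (by positivity)]
    have e : (1 + (D-M)*ε)*(2*M) - D = (D-2*M)^2/D := by
      rw [hε]; field_simp; ring
    have : 0 < (D-2*M)^2/D := by positivity
    linarith
  have hpow : D/(2*M) < (1+ε)^(d-m) := lt_of_lt_of_le hkey hber
  rw [hbase, inv_pow]
  have : (2*M/D) = (D/(2*M))⁻¹ := by rw [inv_div]
  rw [this]
  exact inv_strictAnti₀ (by positivity) hpow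


lemma ds_root_unique_aux (m d : ℕ) (hm : 1 ≤ m) (hd : 2 * m < d) {s t : ℝ}
    (hs : s ∈ Set.Ioo (0:ℝ) (2*(m:ℝ)/d)) (ht : t ∈ Set.Ioo (0:ℝ) (2*(m:ℝ)/d))
    (hs' : ((m:ℝ)/((m:ℝ)+1-s))^(d-m) = s) (ht' : ((m:ℝ)/((m:ℝ)+1-t))^(d-m) = t)
    (hst : s < t) : False := by
  have hM : (1:ℝ) ≤ (m:ℝ) := by exact_mod_cast hm
  have hD : 2*(m:ℝ) < (d:ℝ) := by exact_mod_cast hd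
  have hd0 : (0:ℝ) < d := by linarith
  have hu1 : 2*(m:ℝ)/d < 1 := by rw [div_lt_one hd0]; linarith
  set u : ℝ := 2*(m:ℝ)/d with hu
  have hsu : s ∈ Set.Iio ((m:ℝ)+1) := by
    simp only [Set.mem_Iio]; have := hs.2; linarith
  have huu : u ∈ Set.Iio ((m:ℝ)+1) := by
    simp only [Set.mem_Iio]; linarith
  have htu : t < u := ht.2
  have hslope := (ds_convex m (d-m)).slope_mono_adjacent hsu huu hst htu
  rw [hs', ht'] at hslope
  set F : ℝ := ((m:ℝ)/((m:ℝ)+1-u))^(d-m) with hF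
  have h1 : (t - s)/(t - s) = 1 := div_self (by linarith)
  rw [h1] at hslope
  have h2 : u - t ≤ F - t := by
    have h3 : 0 < u - t := by linarith
    calc u - t = 1 * (u - t) := (one_mul _).symm
    _ ≤ (F - t)/(u - t) * (u - t) := by
        apply mul_le_mul_of_nonneg_right hslope h3.le
    _ = F - t := by field_simp
  have h4 : F < u := ds_root_lt m d hm hd
  linarith

lemma ds_root_unique (m d : ℕ) (hm : 1 ≤ m) (hd : 2 * m < d) {s t : ℝ}
    (hs : s ∈ Set.Ioo (0:ℝ) (2*(m:ℝ)/d)) (ht : t ∈ Set.Ioo (0:ℝ) (2*(m:ℝ)/d))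
    (hs' : ((m:ℝ)/((m:ℝ)+1-s))^(d-m) = s) (ht' : ((m:ℝ)/((m:ℝ)+1-t))^(d-m) = t) :
    s = t := by
  rcases lt_trichotomy s t with h|h|h
  · exact absurd (ds_root_unique_aux m d hm hd hs ht hs' ht' h) (by simp)
  · exact h
  · exact absurd (ds_root_unique_aux m d hm hd ht hs ht' hs' h) (by simp)

lemma ds_telescope (m d : ℕ) (hmd : m + 1 ≤ d) (x : ℕ → ℝ) :
    ∑ k ∈ Finset.Icc (m+1) (d-1), (x (k-1) - x k) = x m - x (d-1) := by
  have h1 : Finset.Icc (m+1) (d-1) = Finset.Ico (m+1) d := by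
    ext k; simp only [Finset.mem_Icc, Finset.mem_Ico]; omega
  rw [h1, Finset.sum_Ico_eq_sum_range]
  have h2 : ∀ i, x (m+1+i-1) - x (m+1+i) = -(x (m+(i+1)) - x (m+i)) := by
    intro i
    have e1 : m+1+i-1 = m+i := by omega
    have e2 : m+1+i = m+(i+1) := by omega
    rw [e1, e2]; ring
  rw [Finset.sum_congr rfl (fun i _ => h2 i), Finset.sum_neg_distrib,
    Finset.sum_range_sub (fun i => x (m+i))]
  have e3 : m + (d - (m+1)) = d - 1 := by omega
  rw [e3, Nat.add_zero]
  ring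

theorem degreeSystem_unique_solution (m d : ℕ) (hm : 1 ≤ m) (hd : 2 * m < d)
    (ρ : ℕ → ℝ)
    (hρd_mem : ρ d ∈ Set.Ioo (0 : ℝ) (2 * m / d))
    (hρd_root : ((m : ℝ) / ((m : ℝ) + 1 - ρ d)) ^ (d - m) = ρ d)
    (hρ : ∀ k : ℕ, m ≤ k → k ≤ d - 1 →
      ρ k = (1 - ρ d) * (m : ℝ) ^ (k - m) / ((m : ℝ) + 1 - ρ d) ^ (k - m + 1)) :
    (degreeSystem m d ρ) ∧
    (∀ x : ℕ → ℝ, x d ∈ Set.Ioo (0 : ℝ) (2 * m / d) → degreeSystem m d x →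
      ∀ k : ℕ, m ≤ k → k ≤ d → x k = ρ k) ∧
    (∀ x : ℕ → ℝ, x d < 1 → (degreeSystem m d x ↔ degreeSystem' m d x)) ∧
    (∑ k ∈ Finset.Icc m d, ρ k = 1) := by
  have hM : (1:ℝ) ≤ (m:ℝ) := by exact_mod_cast hm
  have hD : 2*(m:ℝ) < (d:ℝ) := by exact_mod_cast hd
  have hd0 : (0:ℝ) < d := by linarith
  have hu1 : 2*(m:ℝ)/d < 1 := by rw [div_lt_one hd0]; linarith
  have hr0 : 0 < ρ d := hρd_mem.1
  have hr1 : ρ d < 1 := lt_trans hρd_mem.2 hu1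
  have hAr : (0:ℝ) < 1 - ρ d := by linarith
  have hBr : (0:ℝ) < (m:ℝ) + 1 - ρ d := by linarith
  -- Part 1 : ρ satisfies the system
  have part1 : degreeSystem m d ρ := by
    refine ⟨?_, ?_, ?_⟩
    · have e1 : ρ m = (1 - ρ d) * (m:ℝ)^(m-m) / ((m:ℝ)+1-ρ d)^(m-m+1) :=
        hρ m le_rfl (by omega)
      rw [Nat.sub_self] at e1
      simp only [pow_zero, mul_one, zero_add, pow_one] at e1
      rw [e1]
      exact alg1 (m:ℝ) (ρ d) hAr.ne' hBr.ne'
    · intro k hk1 hk2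
      have e1 : ρ (k-1) = (1 - ρ d) * (m:ℝ)^(k-1-m) / ((m:ℝ)+1-ρ d)^(k-1-m+1) :=
        hρ (k-1) (by omega) (by omega)
      have e2 : ρ k = (1 - ρ d) * (m:ℝ)^(k-m) / ((m:ℝ)+1-ρ d)^(k-m+1) :=
        hρ k (by omega) hk2
      have e3 : k - m = (k-1-m)+1 := by omega
      rw [e1, e2, e3]
      exact alg2 (m:ℝ) (ρ d) (k-1-m) hAr.ne' hBr.ne'
    · have e1 : ρ (d-1) = (1 - ρ d) * (m:ℝ)^(d-1-m) / ((m:ℝ)+1-ρ d)^(d-1-m+1) :=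
        hρ (d-1) (by omega) le_rfl
      have e4 : d - m = (d-1-m)+1 := by omega
      rw [e1, alg3 (m:ℝ) (ρ d) (d-1-m) hAr.ne' hBr.ne', ← e4]
      exact hρd_root
  -- Part 2 : uniqueness
  have part2 : ∀ x : ℕ → ℝ, x d ∈ Set.Ioo (0 : ℝ) (2 * m / d) → degreeSystem m d x →
      ∀ k : ℕ, m ≤ k → k ≤ d → x k = ρ k := by
    intro x hx hsys
    obtain ⟨h1, h2, h3⟩ := hsys
    have hxr1 : x d < 1 := lt_trans hx.2 hu1
    have hA : (0:ℝ) < 1 - x d := by linarith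
    have hB : (0:ℝ) < (m:ℝ) + 1 - x d := by linarith
    have hxm : x m = (1 - x d) / ((m:ℝ) + 1 - x d) := by
      rw [eq_div_iff hB.ne']
      field_simp at h1
      linarith [h1]
    have hform : ∀ j : ℕ, m + j ≤ d - 1 →
        x (m+j) = (1 - x d) * (m:ℝ)^j / ((m:ℝ)+1-x d)^(j+1) := by
      intro j
      induction j with
      | zero =>
        intro _
        simpa using hxm
      | succ i ih =>
        intro hle
        have hxi := ih (by omega)
        have h2' := h2 (m+i+1) (by omega) (by omega)
        have hidx : m + i + 1 - 1 = m + i := by omega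
        rw [hidx] at h2'
        have hstep : x (m+i+1) = (m:ℝ)/((m:ℝ)+1-x d) * x (m+i) := by
          rw [eq_comm, div_mul_eq_mul_div, div_eq_iff hB.ne']
          field_simp at h2'
          linarith [h2']
        have : m + (i+1) = m + i + 1 := rfl
        rw [this, hstep, hxi]
        exact alg4 (m:ℝ) (x d) i hA.ne' hB.ne'
    have hd1 : d - 1 = m + (d - m - 1) := by omega
    have hxd1 : x (d-1) = (1 - x d) * (m:ℝ)^(d-m-1) / ((m:ℝ)+1-x d)^(d-m-1+1) := by
      rw [hd1]; exact hform _ (by omega)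
    have hroot : ((m:ℝ)/((m:ℝ)+1-x d))^(d-m) = x d := by
      rw [hxd1] at h3
      have e4 : d - m = (d-m-1)+1 := by omega
      rw [e4, ← alg3 (m:ℝ) (x d) (d-m-1) hA.ne' hB.ne']
      exact h3
    have hrρ : x d = ρ d := ds_root_unique m d hm hd hx hρd_mem hroot hρd_root
    intro k hk1 hk2
    rcases eq_or_lt_of_le hk2 with hkd | hkd
    · rw [hkd, hrρ]
    · have hk3 : k ≤ d - 1 := by omega
      have e5 : k = m + (k - m) := by omega
      have e6 := hform (k-m) (by omega)
      rw [← e5] at e6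
      rw [e6, hρ k hk1 hk3, hrρ]
  -- Part 3 : equivalence
  have part3 : ∀ x : ℕ → ℝ, x d < 1 → (degreeSystem m d x ↔ degreeSystem' m d x) := by
    intro x hxd1
    have hA : (0:ℝ) < 1 - x d := by linarith
    have hsplit : ∑ k ∈ Finset.Icc m d, x k
        = x m + (∑ k ∈ Finset.Icc (m+1) (d-1), x k) + x d := by
      have h1 : Finset.Icc m d = insert m (insert d (Finset.Icc (m+1) (d-1))) := by
        ext k
        simp only [Finset.mem_Icc, Finset.mem_insert]
        omega
      rw [h1, Finset.sum_insert (by simp only [Finset.mem_insert, Finset.mem_Icc]; omega),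
        Finset.sum_insert (by simp only [Finset.mem_Icc]; omega)]
      ring
    constructor
    · rintro ⟨h1, h2, h3⟩
      refine ⟨h1, h2, ?_⟩
      have hTsum : ∑ k ∈ Finset.Icc (m+1) (d-1), x k
          = ((m:ℝ)/(1-x d)) * x m - ((m:ℝ)/(1-x d)) * x (d-1) := by
        rw [← mul_sub, ← ds_telescope m d (by omega) x, Finset.mul_sum]
        apply Finset.sum_congr rfl
        intro k hk
        simp only [Finset.mem_Icc] at hk
        exact (h2 k hk.1 hk.2).symm
      rw [hsplit, hTsum]
      linarith [h1, h3]
    · rintro ⟨h1, h2, h3⟩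
      refine ⟨h1, h2, ?_⟩
      have hTsum : ∑ k ∈ Finset.Icc (m+1) (d-1), x k
          = ((m:ℝ)/(1-x d)) * x m - ((m:ℝ)/(1-x d)) * x (d-1) := by
        rw [← mul_sub, ← ds_telescope m d (by omega) x, Finset.mul_sum]
        apply Finset.sum_congr rfl
        intro k hk
        simp only [Finset.mem_Icc] at hk
        exact (h2 k hk.1 hk.2).symm
      rw [hsplit, hTsum] at h3
      linarith [h1, h3]
  refine ⟨part1, part2, part3, ?_⟩
  exact ((part3 ρ hr1).mp part1).2.2
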